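/- Let V = ℤ^{2g−1} with the alternating form ⟨e_i, e_j⟩' = −1 if j = i+1, 1 if j = i−1, 0 otherwise, and let v' = e₁ + e₃ + ⋯ + e_{2g−1}. Let Γ' be the group of form-preserving automorphisms of V fixing v'. Then Γ' is isomorphic to the semidirect product Sp(2g−2, ℤ) ⋉ ℤ^{2g−2}, where the kernel of the natural map Γ' → Sp(2g−2, ℤ) (induced on V modulo the span of v') is free abelian of rank 2g−2. -/

import Mathlib

open Matrix
open scoped MatrixGroups

/-- The Gram matrix of the alternating form `⟨e_i, e_j⟩' = −1` if `j = i+1`, `1` if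
`j = i−1`, `0` otherwise, on `ℤ^{2g−1}`. -/
def primeJ (g : ℕ) : Matrix (Fin (2 * g - 1)) (Fin (2 * g - 1)) ℤ :=
  Matrix.of fun i j =>
    if (j : ℕ) = (i : ℕ) + 1 then -1
    else if (i : ℕ) = (j : ℕ) + 1 then 1
    else 0

/-- The vector `v' = e₁ + e₃ + ⋯ + e_{2g−1}` in `ℤ^{2g−1}`. -/
def vPrime (g : ℕ) : Fin (2 * g - 1) → ℤ := fun i => if (i : ℕ) % 2 = 0 then 1 else 0

/-- The subgroup of `GL(m, ℤ)` of automorphisms preserving the bilinear form with Gram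
matrix `J` and fixing the vector `v`. -/
def glFormStab (m : ℕ) (J : Matrix (Fin m) (Fin m) ℤ) (v : Fin m → ℤ) :
    Subgroup (GL (Fin m) ℤ) where
  carrier := {A | (A : Matrix (Fin m) (Fin m) ℤ)ᵀ * J * (A : Matrix (Fin m) (Fin m) ℤ) = J ∧
    (A : Matrix (Fin m) (Fin m) ℤ).mulVec v = v}
  one_mem' := by
    constructor
    · simp
    · simp [Matrix.one_mulVec]
  mul_mem' := by
    rintro a b ⟨ha1, ha2⟩ ⟨hb1, hb2⟩
    constructor
    · show ((a * b : GL (Fin m) ℤ) : Matrix (Fin m) (Fin m) ℤ)ᵀ * J *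
        ((a * b : GL (Fin m) ℤ) : Matrix (Fin m) (Fin m) ℤ) = J
      rw [Units.val_mul, Matrix.transpose_mul]
      calc ((b : Matrix (Fin m) (Fin m) ℤ)ᵀ * (a : Matrix (Fin m) (Fin m) ℤ)ᵀ) * J *
            ((a : Matrix (Fin m) (Fin m) ℤ) * (b : Matrix (Fin m) (Fin m) ℤ))
          = (b : Matrix (Fin m) (Fin m) ℤ)ᵀ *
              ((a : Matrix (Fin m) (Fin m) ℤ)ᵀ * J * (a : Matrix (Fin m) (Fin m) ℤ)) *
              (b : Matrix (Fin m) (Fin m) ℤ) := by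
            simp only [Matrix.mul_assoc]
        _ = J := by rw [ha1, hb1]
    · show ((a * b : GL (Fin m) ℤ) : Matrix (Fin m) (Fin m) ℤ).mulVec v = v
      rw [Units.val_mul, ← Matrix.mulVec_mulVec, hb2, ha2]
  inv_mem' := by
    rintro a ⟨h1, h2⟩
    constructor
    · show ((a⁻¹ : GL (Fin m) ℤ) : Matrix (Fin m) (Fin m) ℤ)ᵀ * J *
        ((a⁻¹ : GL (Fin m) ℤ) : Matrix (Fin m) (Fin m) ℤ) = J
      conv_lhs => rw [← h1]
      calc ((a⁻¹ : GL (Fin m) ℤ) : Matrix (Fin m) (Fin m) ℤ)ᵀ *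
            ((a : Matrix (Fin m) (Fin m) ℤ)ᵀ * J * (a : Matrix (Fin m) (Fin m) ℤ)) *
            ((a⁻¹ : GL (Fin m) ℤ) : Matrix (Fin m) (Fin m) ℤ)
          = ((a : Matrix (Fin m) (Fin m) ℤ) *
              ((a⁻¹ : GL (Fin m) ℤ) : Matrix (Fin m) (Fin m) ℤ))ᵀ * J *
              ((a : Matrix (Fin m) (Fin m) ℤ) *
                ((a⁻¹ : GL (Fin m) ℤ) : Matrix (Fin m) (Fin m) ℤ)) := by
            rw [Matrix.transpose_mul]; simp only [Matrix.mul_assoc]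
        _ = J := by
            rw [← Units.val_mul, mul_inv_cancel]
            simp
    · show ((a⁻¹ : GL (Fin m) ℤ) : Matrix (Fin m) (Fin m) ℤ).mulVec v = v
      conv_lhs => rw [← h2]
      rw [Matrix.mulVec_mulVec, ← Units.val_mul, inv_mul_cancel]
      simp [Matrix.one_mulVec]

/-- The additive automorphism of `ℤ^{2k}` given by a symplectic matrix. -/
def spVecAut (k : ℕ) (A : Matrix.symplecticGroup (Fin k) ℤ) :
    AddAut ((Fin k ⊕ Fin k) → ℤ) where
  toFun v := (A : Matrix (Fin k ⊕ Fin k) (Fin k ⊕ Fin k) ℤ).mulVec v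
  invFun v := ((A⁻¹ : Matrix.symplecticGroup (Fin k) ℤ) :
      Matrix (Fin k ⊕ Fin k) (Fin k ⊕ Fin k) ℤ).mulVec v
  left_inv v := by
    show _ *ᵥ _ *ᵥ _ = _
    rw [Matrix.mulVec_mulVec, ← Submonoid.coe_mul, inv_mul_cancel, Submonoid.coe_one,
      Matrix.one_mulVec]
  right_inv v := by
    show _ *ᵥ _ *ᵥ _ = _
    rw [Matrix.mulVec_mulVec, ← Submonoid.coe_mul, mul_inv_cancel, Submonoid.coe_one,
      Matrix.one_mulVec]
  map_add' x y := Matrix.mulVec_add _ x y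

/-- The action of `Sp(2k, ℤ)` on `ℤ^{2k}` by matrix multiplication, as a homomorphism into
the automorphisms of `Multiplicative (ℤ^{2k})`. -/
def spMulAutHom (k : ℕ) :
    Matrix.symplecticGroup (Fin k) ℤ →* MulAut (Multiplicative ((Fin k ⊕ Fin k) → ℤ)) where
  toFun A := AddEquiv.toMultiplicative (spVecAut k A)
  map_one' := by
    apply MulEquiv.ext; intro v
    show ((1 : Matrix.symplecticGroup (Fin k) ℤ) :
        Matrix (Fin k ⊕ Fin k) (Fin k ⊕ Fin k) ℤ).mulVec v.toAdd = v.toAdd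
    rw [Submonoid.coe_one, Matrix.one_mulVec]
  map_mul' A B := by
    apply MulEquiv.ext; intro v
    show ((A * B : Matrix.symplecticGroup (Fin k) ℤ) :
        Matrix (Fin k ⊕ Fin k) (Fin k ⊕ Fin k) ℤ).mulVec v.toAdd =
      (A : Matrix (Fin k ⊕ Fin k) (Fin k ⊕ Fin k) ℤ).mulVec
        ((B : Matrix (Fin k ⊕ Fin k) (Fin k ⊕ Fin k) ℤ).mulVec v.toAdd)
    rw [Submonoid.coe_mul, Matrix.mulVec_mulVec]


namespace GammaAux

lemma sum_fin_const {n : ℕ} (t : ℕ) (c : ℤ) :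
    (∑ i : Fin n, if (i : ℕ) = t then c else 0) = if t < n then c else 0 := by
  by_cases h : t < n
  · rw [if_pos h, Fintype.sum_eq_single (⟨t, h⟩ : Fin n)]
    · simp
    · intro x hx
      exact if_neg (fun hc => hx (Fin.ext hc))
  · rw [if_neg h]
    refine Finset.sum_eq_zero (fun x _ => if_neg (fun hc => h ?_))
    exact hc ▸ x.isLt

def Umat (g : ℕ) : Matrix (Fin (2*g-1)) ((Fin (g-1) ⊕ Fin (g-1)) ⊕ Unit) ℤ :=
  Matrix.of fun r p =>
    match p with
    | .inl (.inl i) => if (r : ℕ) = 2*(i : ℕ) then 1 else 0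
    | .inl (.inr i) => if (r : ℕ) % 2 = 1 ∧ 2*(i : ℕ)+1 ≤ (r : ℕ) then 1 else 0
    | .inr _ => if (r : ℕ) % 2 = 0 then 1 else 0

def Wmat (g : ℕ) : Matrix ((Fin (g-1) ⊕ Fin (g-1)) ⊕ Unit) (Fin (2*g-1)) ℤ :=
  Matrix.of fun p r =>
    match p with
    | .inl (.inl i) => if (r : ℕ) = 2*(i : ℕ) then 1 else if (r : ℕ) = 2*g-2 then -1 else 0
    | .inl (.inr i) => if (r : ℕ) = 2*(i : ℕ)+1 then 1
        else if (r : ℕ)+2 = 2*(i : ℕ)+1 then -1 else 0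
    | .inr _ => if (r : ℕ) = 2*g-2 then 1 else 0

/-- The degenerate symplectic form in the new basis. -/
def Jtil (g : ℕ) : Matrix ((Fin (g-1) ⊕ Fin (g-1)) ⊕ Unit) ((Fin (g-1) ⊕ Fin (g-1)) ⊕ Unit) ℤ :=
  Matrix.fromBlocks (Matrix.J (Fin (g-1)) ℤ) 0 0 0

lemma hUW (g : ℕ) : Umat g * Wmat g = 1 := by
  ext r s
  rw [Matrix.mul_apply, Fintype.sum_sum_type, Fintype.sum_sum_type]
  have h1 : ∀ i : Fin (g-1),
      Umat g r (.inl (.inl i)) * Wmat g (.inl (.inl i)) s =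
      (if (i : ℕ) = (r : ℕ)/2 then
        (if (r : ℕ) % 2 = 0 then
          (if (s : ℕ) = (r : ℕ) then 1 else if (s : ℕ) = 2*g-2 then -1 else 0) else 0)
       else 0) := by
    intro i
    simp only [Umat, Wmat, of_apply]
    split_ifs <;> omega
  have h2 : ∀ i : Fin (g-1),
      Umat g r (.inl (.inr i)) * Wmat g (.inl (.inr i)) s =
      (if (i : ℕ) = (s : ℕ)/2 then
        (if (r : ℕ) % 2 = 1 ∧ (s : ℕ) % 2 = 1 ∧ (s : ℕ) ≤ (r : ℕ) then 1 else 0) else 0)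
      + (if (i : ℕ) = ((s : ℕ)+1)/2 then
        (if (r : ℕ) % 2 = 1 ∧ (s : ℕ) % 2 = 1 ∧ (s : ℕ)+2 ≤ (r : ℕ) then -1 else 0) else 0) := by
    intro i
    simp only [Umat, Wmat, of_apply]
    split_ifs <;> omega
  rw [Finset.sum_congr rfl (fun i _ => h1 i), Finset.sum_congr rfl (fun i _ => h2 i),
    Finset.sum_add_distrib, sum_fin_const, sum_fin_const, sum_fin_const]
  have hr := r.isLt
  have hs := s.isLt
  simp only [Umat, Wmat, of_apply, Matrix.one_apply, Fin.ext_iff, Finset.univ_unique,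
    Finset.sum_singleton]
  split_ifs <;> omega

lemma hWU (g : ℕ) (hg : 1 ≤ g) : Wmat g * Umat g = 1 := by
  have e : ((Fin (g-1) ⊕ Fin (g-1)) ⊕ Unit) ≃ Fin (2*g-1) :=
    ((Equiv.sumCongr (finSumFinEquiv) (Equiv.ofUnique Unit (Fin 1))).trans
      finSumFinEquiv).trans (finCongr (by omega))
  exact (Matrix.mul_eq_one_comm_of_equiv e).mpr (hUW g)

lemma hJU (g : ℕ) : primeJ g * Umat g = (Wmat g)ᵀ * Jtil g := by
  ext r q
  have hRHS : ((Wmat g)ᵀ * Jtil g) r q =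
      match q with
      | .inl (.inl j) => Wmat g (.inl (.inr j)) r
      | .inl (.inr j) => -(Wmat g (.inl (.inl j)) r)
      | .inr _ => 0 := by
    rcases q with (j | j) | u
    · rw [Matrix.mul_apply, Fintype.sum_eq_single (Sum.inl (Sum.inr j) :
        (Fin (g-1) ⊕ Fin (g-1)) ⊕ Unit)]
      · simp [Jtil, Matrix.J, Matrix.fromBlocks, Matrix.one_apply]
      · rintro ((i | i) | u) hp <;>
          simp [Jtil, Matrix.J, Matrix.fromBlocks, Matrix.one_apply] at hp ⊢ <;>
          simp [Matrix.one_apply, hp]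
    · rw [Matrix.mul_apply, Fintype.sum_eq_single (Sum.inl (Sum.inl j) :
        (Fin (g-1) ⊕ Fin (g-1)) ⊕ Unit)]
      · simp [Jtil, Matrix.J, Matrix.fromBlocks, Matrix.one_apply]
      · rintro ((i | i) | u) hp <;>
          simp [Jtil, Matrix.J, Matrix.fromBlocks, Matrix.one_apply] at hp ⊢ <;>
          simp [Matrix.one_apply, hp]
    · rw [Matrix.mul_apply]
      refine Finset.sum_eq_zero ?_
      rintro ((i | i) | u) _ <;> simp [Jtil, Matrix.J, Matrix.fromBlocks]
  rw [hRHS, Matrix.mul_apply]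
  have hr := r.isLt
  rcases q with (j | j) | u
  · have h1 : ∀ s : Fin (2*g-1),
        primeJ g r s * Umat g s (.inl (.inl j)) =
        (if (s : ℕ) = (r : ℕ)+1 then (if (r : ℕ)+1 = 2*(j : ℕ) then -1 else 0) else 0)
        + (if (s : ℕ) = (r : ℕ)-1 then
            (if 1 ≤ (r : ℕ) ∧ (r : ℕ)-1 = 2*(j : ℕ) then 1 else 0) else 0) := by
      intro s
      simp only [primeJ, Umat, of_apply]
      split_ifs <;> omega
    rw [Finset.sum_congr rfl (fun s _ => h1 s), Finset.sum_add_distrib,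
      sum_fin_const, sum_fin_const]
    have hj := j.isLt
    simp only [Wmat, of_apply]
    split_ifs <;> omega
  · have h1 : ∀ s : Fin (2*g-1),
        primeJ g r s * Umat g s (.inl (.inr j)) =
        (if (s : ℕ) = (r : ℕ)+1 then
          (if ((r : ℕ)+1) % 2 = 1 ∧ 2*(j : ℕ)+1 ≤ (r : ℕ)+1 then -1 else 0) else 0)
        + (if (s : ℕ) = (r : ℕ)-1 then
            (if 1 ≤ (r : ℕ) ∧ ((r : ℕ)-1) % 2 = 1 ∧ 2*(j : ℕ)+1 ≤ (r : ℕ)-1 then 1 else 0)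
          else 0) := by
      intro s
      simp only [primeJ, Umat, of_apply]
      split_ifs <;> omega
    rw [Finset.sum_congr rfl (fun s _ => h1 s), Finset.sum_add_distrib,
      sum_fin_const, sum_fin_const]
    have hj := j.isLt
    simp only [Wmat, of_apply]
    split_ifs <;> omega
  · have h1 : ∀ s : Fin (2*g-1),
        primeJ g r s * Umat g s (.inr ()) =
        (if (s : ℕ) = (r : ℕ)+1 then (if ((r : ℕ)+1) % 2 = 0 then -1 else 0) else 0)
        + (if (s : ℕ) = (r : ℕ)-1 then
            (if 1 ≤ (r : ℕ) ∧ ((r : ℕ)-1) % 2 = 0 then 1 else 0) else 0) := by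
      intro s
      simp only [primeJ, Umat, of_apply]
      split_ifs <;> omega
    rw [Finset.sum_congr rfl (fun s _ => h1 s), Finset.sum_add_distrib,
      sum_fin_const, sum_fin_const]
    show _ = (0 : ℤ)
    split_ifs <;> omega

lemma hUJU (g : ℕ) (hg : 1 ≤ g) : (Umat g)ᵀ * primeJ g * Umat g = Jtil g := by
  rw [Matrix.mul_assoc, hJU, ← Matrix.mul_assoc, ← Matrix.transpose_mul, hWU g hg]
  simp

lemma hWJW (g : ℕ) : (Wmat g)ᵀ * Jtil g * Wmat g = primeJ g := by
  rw [← hJU, Matrix.mul_assoc, hUW, Matrix.mul_one]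




lemma Jcomm {k : ℕ} (A : Matrix.symplecticGroup (Fin k) ℤ) (w : Fin k ⊕ Fin k → ℤ) :
    Matrix.J (Fin k) ℤ *ᵥ (w ᵥ* ((A⁻¹ : Matrix.symplecticGroup (Fin k) ℤ) : Matrix (Fin k ⊕ Fin k) (Fin k ⊕ Fin k) ℤ)) =
      (A : Matrix (Fin k ⊕ Fin k) (Fin k ⊕ Fin k) ℤ) *ᵥ (Matrix.J (Fin k) ℤ *ᵥ w) := by
  have h : Matrix.J (Fin k) ℤ *
      ((A⁻¹ : Matrix.symplecticGroup (Fin k) ℤ) : Matrix (Fin k ⊕ Fin k) (Fin k ⊕ Fin k) ℤ)ᵀ =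
      (A : Matrix (Fin k ⊕ Fin k) (Fin k ⊕ Fin k) ℤ) * Matrix.J (Fin k) ℤ := by
    rw [SymplecticGroup.coe_inv', SymplecticGroup.inv_eq_symplectic_inv _ A.2]
    calc Matrix.J (Fin k) ℤ *
        (-Matrix.J (Fin k) ℤ * (A : Matrix (Fin k ⊕ Fin k) (Fin k ⊕ Fin k) ℤ)ᵀ *
          Matrix.J (Fin k) ℤ)ᵀ
        = Matrix.J (Fin k) ℤ * ((Matrix.J (Fin k) ℤ)ᵀ *
            ((A : Matrix (Fin k ⊕ Fin k) (Fin k ⊕ Fin k) ℤ) *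
              (-Matrix.J (Fin k) ℤ)ᵀ)) := by
          rw [Matrix.transpose_mul, Matrix.transpose_mul, Matrix.transpose_transpose]

      _ = (A : Matrix (Fin k ⊕ Fin k) (Fin k ⊕ Fin k) ℤ) * Matrix.J (Fin k) ℤ := by
          rw [Matrix.J_transpose, Matrix.transpose_neg, Matrix.J_transpose, neg_neg,
            ← Matrix.mul_assoc, Matrix.mul_neg, Matrix.J_squared, neg_neg, Matrix.one_mul]
  rw [← Matrix.mulVec_transpose, Matrix.mulVec_mulVec, Matrix.mulVec_mulVec, h]



/-- The distinguished vector `δ = (0,…,0,1)` in the new coordinates. -/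
def deltaV (g : ℕ) : ((Fin (g-1) ⊕ Fin (g-1)) ⊕ Unit) → ℤ := Sum.elim 0 1

lemma mulVec_deltaV {g : ℕ} {ι' : Type*} (M : Matrix ι' ((Fin (g-1) ⊕ Fin (g-1)) ⊕ Unit) ℤ)
    (p : ι') : (M *ᵥ deltaV g) p = M p (.inr ()) := by
  simp [Matrix.mulVec, dotProduct, deltaV, Fintype.sum_sum_type]

lemma hUdelta (g : ℕ) : Umat g *ᵥ deltaV g = vPrime g := by
  funext r
  rw [mulVec_deltaV]
  rfl

lemma hWv (g : ℕ) (hg : 1 ≤ g) : Wmat g *ᵥ vPrime g = deltaV g := by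
  rw [← hUdelta g, Matrix.mulVec_mulVec, hWU g hg, Matrix.one_mulVec]

/-- Block matrix `[[S, 0], [c, 1]]` in the new coordinates. -/
def Emat (g : ℕ) (S : Matrix (Fin (g-1) ⊕ Fin (g-1)) (Fin (g-1) ⊕ Fin (g-1)) ℤ)
    (c : (Fin (g-1) ⊕ Fin (g-1)) → ℤ) :
    Matrix ((Fin (g-1) ⊕ Fin (g-1)) ⊕ Unit) ((Fin (g-1) ⊕ Fin (g-1)) ⊕ Unit) ℤ :=
  Matrix.fromBlocks S 0 (Matrix.replicateRow Unit c) 1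

lemma Emat_mul (g : ℕ) (S S' : Matrix (Fin (g-1) ⊕ Fin (g-1)) (Fin (g-1) ⊕ Fin (g-1)) ℤ)
    (c c' : (Fin (g-1) ⊕ Fin (g-1)) → ℤ) :
    Emat g S c * Emat g S' c' = Emat g (S * S') (c ᵥ* S' + c') := by
  simp only [Emat, Matrix.fromBlocks_multiply, Matrix.mul_zero, Matrix.zero_mul,
    Matrix.mul_one, Matrix.one_mul, add_zero, zero_add, Matrix.replicateRow_add, Matrix.replicateRow_vecMul]

lemma Emat_one (g : ℕ) : Emat g 1 0 = 1 := by
  rw [Emat, Matrix.replicateRow_zero]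
  exact Matrix.fromBlocks_one

lemma Emat_mulVec_delta (g : ℕ) (S : Matrix (Fin (g-1) ⊕ Fin (g-1)) (Fin (g-1) ⊕ Fin (g-1)) ℤ)
    (c : (Fin (g-1) ⊕ Fin (g-1)) → ℤ) : Emat g S c *ᵥ deltaV g = deltaV g := by
  funext p
  rw [mulVec_deltaV]
  rcases p with p | u
  · rfl
  · rfl

lemma Emat_form (g : ℕ) (S : Matrix (Fin (g-1) ⊕ Fin (g-1)) (Fin (g-1) ⊕ Fin (g-1)) ℤ)
    (hS : S ∈ Matrix.symplecticGroup (Fin (g-1)) ℤ) (c : (Fin (g-1) ⊕ Fin (g-1)) → ℤ) :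
    (Emat g S c)ᵀ * Jtil g * Emat g S c = Jtil g := by
  have h := SymplecticGroup.mem_iff'.mp hS
  rw [Emat, Jtil, Matrix.fromBlocks_transpose, Matrix.fromBlocks_multiply,
    Matrix.fromBlocks_multiply]
  simp [h]

lemma mem_of_form (g : ℕ) (S : Matrix (Fin (g-1) ⊕ Fin (g-1)) (Fin (g-1) ⊕ Fin (g-1)) ℤ)
    (c : (Fin (g-1) ⊕ Fin (g-1)) → ℤ)
    (h : (Emat g S c)ᵀ * Jtil g * Emat g S c = Jtil g) :
    S ∈ Matrix.symplecticGroup (Fin (g-1)) ℤ := by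
  rw [SymplecticGroup.mem_iff']
  have h2 := congrArg Matrix.toBlocks₁₁ h
  simpa [Emat, Jtil, Matrix.fromBlocks_transpose, Matrix.fromBlocks_multiply,
    Matrix.toBlocks_fromBlocks₁₁] using h2

lemma Emat_inj (g : ℕ) {S S' : Matrix (Fin (g-1) ⊕ Fin (g-1)) (Fin (g-1) ⊕ Fin (g-1)) ℤ}
    {c c' : (Fin (g-1) ⊕ Fin (g-1)) → ℤ} (h : Emat g S c = Emat g S' c') :
    S = S' ∧ c = c' := by
  constructor
  · ext i j
    exact congrFun (congrFun h (.inl i)) (.inl j)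
  · funext j
    exact congrFun (congrFun h (.inr ())) (.inl j)

/-- The conjugated matrix `W B U`. -/
def Xof (g : ℕ) (B : GL (Fin (2*g-1)) ℤ) :
    Matrix ((Fin (g-1) ⊕ Fin (g-1)) ⊕ Unit) ((Fin (g-1) ⊕ Fin (g-1)) ⊕ Unit) ℤ :=
  Wmat g * (B : Matrix (Fin (2*g-1)) (Fin (2*g-1)) ℤ) * Umat g

def Sof (g : ℕ) (B : GL (Fin (2*g-1)) ℤ) :
    Matrix (Fin (g-1) ⊕ Fin (g-1)) (Fin (g-1) ⊕ Fin (g-1)) ℤ :=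
  Matrix.of fun i j => Xof g B (.inl i) (.inl j)

def cof (g : ℕ) (B : GL (Fin (2*g-1)) ℤ) : (Fin (g-1) ⊕ Fin (g-1)) → ℤ :=
  fun j => Xof g B (.inr ()) (.inl j)

lemma shape (g : ℕ) (hg : 1 ≤ g) (B : GL (Fin (2*g-1)) ℤ)
    (hB2 : (B : Matrix (Fin (2*g-1)) (Fin (2*g-1)) ℤ).mulVec (vPrime g) = vPrime g) :
    Xof g B = Emat g (Sof g B) (cof g B) := by
  have hv : Xof g B *ᵥ deltaV g = deltaV g := by
    rw [Xof, ← Matrix.mulVec_mulVec, ← Matrix.mulVec_mulVec, hUdelta, hB2, hWv g hg]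
  ext p q
  rcases p with p | u
  · rcases q with q | u'
    · rfl
    · have h := congrFun hv (Sum.inl p)
      rw [mulVec_deltaV] at h
      exact h
  · rcases q with q | u'
    · rfl
    · have h := congrFun hv (Sum.inr ())
      rw [mulVec_deltaV] at h
      exact h

lemma Xof_form (g : ℕ) (hg : 1 ≤ g) (B : GL (Fin (2*g-1)) ℤ)
    (hB1 : (B : Matrix (Fin (2*g-1)) (Fin (2*g-1)) ℤ)ᵀ * primeJ g *
      (B : Matrix (Fin (2*g-1)) (Fin (2*g-1)) ℤ) = primeJ g) :
    (Xof g B)ᵀ * Jtil g * Xof g B = Jtil g := by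
  have hWJW' : ∀ Y : Matrix (Fin (2*g-1)) ((Fin (g-1) ⊕ Fin (g-1)) ⊕ Unit) ℤ,
      (Wmat g)ᵀ * (Jtil g * (Wmat g * Y)) = primeJ g * Y := by
    intro Y
    rw [← Matrix.mul_assoc, ← Matrix.mul_assoc, hWJW]
  have hB1' : ∀ Y : Matrix (Fin (2*g-1)) ((Fin (g-1) ⊕ Fin (g-1)) ⊕ Unit) ℤ,
      (B : Matrix (Fin (2*g-1)) (Fin (2*g-1)) ℤ)ᵀ * (primeJ g *
        ((B : Matrix (Fin (2*g-1)) (Fin (2*g-1)) ℤ) * Y)) = primeJ g * Y := by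
    intro Y
    rw [← Matrix.mul_assoc, ← Matrix.mul_assoc, hB1]
  have hUJU' := hUJU g hg
  rw [Xof]
  simp only [Matrix.transpose_mul, Matrix.mul_assoc]
  rw [hWJW' ((B : Matrix (Fin (2*g-1)) (Fin (2*g-1)) ℤ) * Umat g), hB1' (Umat g),
    ← Matrix.mul_assoc]
  exact hUJU g hg

lemma Sof_mem (g : ℕ) (hg : 1 ≤ g) (B : GL (Fin (2*g-1)) ℤ)
    (hB1 : (B : Matrix (Fin (2*g-1)) (Fin (2*g-1)) ℤ)ᵀ * primeJ g *
      (B : Matrix (Fin (2*g-1)) (Fin (2*g-1)) ℤ) = primeJ g)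
    (hB2 : (B : Matrix (Fin (2*g-1)) (Fin (2*g-1)) ℤ).mulVec (vPrime g) = vPrime g) :
    Sof g B ∈ Matrix.symplecticGroup (Fin (g-1)) ℤ := by
  apply mem_of_form g (Sof g B) (cof g B)
  rw [← shape g hg B hB2]
  exact Xof_form g hg B hB1

end GammaAux

namespace GammaAux

lemma val_mul_inv {k : ℕ} (A : Matrix.symplecticGroup (Fin k) ℤ) :
    (A : Matrix (Fin k ⊕ Fin k) (Fin k ⊕ Fin k) ℤ) * ((A⁻¹ : Matrix.symplecticGroup (Fin k) ℤ) :
      Matrix (Fin k ⊕ Fin k) (Fin k ⊕ Fin k) ℤ) = 1 := by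
  rw [← Submonoid.coe_mul, mul_inv_cancel, Submonoid.coe_one]

lemma inv_val_mul {k : ℕ} (A : Matrix.symplecticGroup (Fin k) ℤ) :
    ((A⁻¹ : Matrix.symplecticGroup (Fin k) ℤ) :
      Matrix (Fin k ⊕ Fin k) (Fin k ⊕ Fin k) ℤ) * (A : Matrix (Fin k ⊕ Fin k) (Fin k ⊕ Fin k) ℤ)
      = 1 := by
  rw [← Submonoid.coe_mul, inv_mul_cancel, Submonoid.coe_one]

lemma roundtrip_c {k : ℕ} (A : Matrix.symplecticGroup (Fin k) ℤ) (c : Fin k ⊕ Fin k → ℤ) :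
    ((-(Matrix.J (Fin k) ℤ)) *ᵥ (Matrix.J (Fin k) ℤ *ᵥ
      (c ᵥ* ((A⁻¹ : Matrix.symplecticGroup (Fin k) ℤ) :
        Matrix (Fin k ⊕ Fin k) (Fin k ⊕ Fin k) ℤ)))) ᵥ*
      (A : Matrix (Fin k ⊕ Fin k) (Fin k ⊕ Fin k) ℤ) = c := by
  rw [Matrix.mulVec_mulVec, Matrix.neg_mul, Matrix.J_squared, neg_neg, Matrix.one_mulVec,
    Matrix.vecMul_vecMul, inv_val_mul, Matrix.vecMul_one]

lemma roundtrip_n {k : ℕ} (A : Matrix.symplecticGroup (Fin k) ℤ) (n : Fin k ⊕ Fin k → ℤ) :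
    Matrix.J (Fin k) ℤ *ᵥ ((((-(Matrix.J (Fin k) ℤ)) *ᵥ n) ᵥ*
      (A : Matrix (Fin k ⊕ Fin k) (Fin k ⊕ Fin k) ℤ)) ᵥ*
      ((A⁻¹ : Matrix.symplecticGroup (Fin k) ℤ) :
        Matrix (Fin k ⊕ Fin k) (Fin k ⊕ Fin k) ℤ)) = n := by
  rw [Matrix.vecMul_vecMul, val_mul_inv, Matrix.vecMul_one, Matrix.mulVec_mulVec,
    Matrix.mul_neg, Matrix.J_squared, neg_neg, Matrix.one_mulVec]

/-- The matrix `U ⬝ [[S,0],[c,1]] ⬝ W` over the standard basis. -/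
def BmatOf (g : ℕ) (A : Matrix.symplecticGroup (Fin (g-1)) ℤ)
    (c : (Fin (g-1) ⊕ Fin (g-1)) → ℤ) : Matrix (Fin (2*g-1)) (Fin (2*g-1)) ℤ :=
  Umat g * Emat g (A : Matrix (Fin (g-1) ⊕ Fin (g-1)) (Fin (g-1) ⊕ Fin (g-1)) ℤ) c * Wmat g

lemma BmatOf_mul (g : ℕ) (hg : 1 ≤ g) (A A' : Matrix.symplecticGroup (Fin (g-1)) ℤ)
    (c c' : (Fin (g-1) ⊕ Fin (g-1)) → ℤ) :
    BmatOf g A c * BmatOf g A' c' =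
      BmatOf g (A * A') (c ᵥ* (A' : Matrix (Fin (g-1) ⊕ Fin (g-1)) (Fin (g-1) ⊕ Fin (g-1)) ℤ)
        + c') := by
  have h : Emat g (A : Matrix (Fin (g-1) ⊕ Fin (g-1)) (Fin (g-1) ⊕ Fin (g-1)) ℤ) c *
      Emat g (A' : Matrix (Fin (g-1) ⊕ Fin (g-1)) (Fin (g-1) ⊕ Fin (g-1)) ℤ) c' =
      Emat g ((A * A' : Matrix.symplecticGroup (Fin (g-1)) ℤ) :
        Matrix (Fin (g-1) ⊕ Fin (g-1)) (Fin (g-1) ⊕ Fin (g-1)) ℤ)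
        (c ᵥ* (A' : Matrix (Fin (g-1) ⊕ Fin (g-1)) (Fin (g-1) ⊕ Fin (g-1)) ℤ) + c') :=
    Emat_mul g _ _ c c'
  rw [BmatOf, BmatOf, BmatOf]
  simp only [Matrix.mul_assoc]
  rw [show Wmat g * (Umat g * (Emat g (A' : Matrix (Fin (g-1) ⊕ Fin (g-1))
      (Fin (g-1) ⊕ Fin (g-1)) ℤ) c' * Wmat g)) =
      Emat g (A' : Matrix (Fin (g-1) ⊕ Fin (g-1)) (Fin (g-1) ⊕ Fin (g-1)) ℤ) c' * Wmat g from by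
    rw [← Matrix.mul_assoc, hWU g hg, Matrix.one_mul]]
  rw [← Matrix.mul_assoc (Emat g _ c), h]

lemma BmatOf_form (g : ℕ) (hg : 1 ≤ g) (A : Matrix.symplecticGroup (Fin (g-1)) ℤ)
    (c : (Fin (g-1) ⊕ Fin (g-1)) → ℤ) :
    (BmatOf g A c)ᵀ * primeJ g * BmatOf g A c = primeJ g := by
  have hUJU' : ∀ Y : Matrix ((Fin (g-1) ⊕ Fin (g-1)) ⊕ Unit) (Fin (2*g-1)) ℤ,
      (Umat g)ᵀ * (primeJ g * (Umat g * Y)) = Jtil g * Y := fun Y => by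
    rw [← Matrix.mul_assoc, ← Matrix.mul_assoc, hUJU g hg]
  have hE : ∀ Y : Matrix ((Fin (g-1) ⊕ Fin (g-1)) ⊕ Unit) (Fin (2*g-1)) ℤ,
      (Emat g (A : Matrix (Fin (g-1) ⊕ Fin (g-1)) (Fin (g-1) ⊕ Fin (g-1)) ℤ) c)ᵀ *
        (Jtil g * (Emat g (A : Matrix (Fin (g-1) ⊕ Fin (g-1)) (Fin (g-1) ⊕ Fin (g-1)) ℤ) c * Y))
        = Jtil g * Y := fun Y => by
    rw [← Matrix.mul_assoc, ← Matrix.mul_assoc, Emat_form g _ A.2 c]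
  rw [BmatOf]
  simp only [Matrix.transpose_mul, Matrix.mul_assoc]
  rw [hUJU' (Emat g (A : Matrix (Fin (g-1) ⊕ Fin (g-1)) (Fin (g-1) ⊕ Fin (g-1)) ℤ) c * Wmat g),
    hE (Wmat g), ← Matrix.mul_assoc]
  exact hWJW g

lemma BmatOf_vec (g : ℕ) (hg : 1 ≤ g) (A : Matrix.symplecticGroup (Fin (g-1)) ℤ)
    (c : (Fin (g-1) ⊕ Fin (g-1)) → ℤ) :
    BmatOf g A c *ᵥ vPrime g = vPrime g := by
  rw [BmatOf, ← Matrix.mulVec_mulVec, ← Matrix.mulVec_mulVec, hWv g hg, Emat_mulVec_delta,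
    hUdelta]

/-- The element of `GL` corresponding to a pair `(A, c)`. -/
def glOf (g : ℕ) (hg : 1 ≤ g) (A : Matrix.symplecticGroup (Fin (g-1)) ℤ)
    (c : (Fin (g-1) ⊕ Fin (g-1)) → ℤ) : GL (Fin (2*g-1)) ℤ where
  val := BmatOf g A c
  inv := BmatOf g A⁻¹ (-(c ᵥ* ((A⁻¹ : Matrix.symplecticGroup (Fin (g-1)) ℤ) :
    Matrix (Fin (g-1) ⊕ Fin (g-1)) (Fin (g-1) ⊕ Fin (g-1)) ℤ)))
  val_inv := by
    rw [BmatOf_mul g hg, add_neg_cancel, mul_inv_cancel, BmatOf]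
    rw [show ((1 : Matrix.symplecticGroup (Fin (g-1)) ℤ) :
      Matrix (Fin (g-1) ⊕ Fin (g-1)) (Fin (g-1) ⊕ Fin (g-1)) ℤ) = 1 from rfl, Emat_one,
      Matrix.mul_one, hUW]
  inv_val := by
    rw [BmatOf_mul g hg, Matrix.neg_vecMul, Matrix.vecMul_vecMul, inv_val_mul,
      Matrix.vecMul_one, neg_add_cancel, inv_mul_cancel, BmatOf]
    rw [show ((1 : Matrix.symplecticGroup (Fin (g-1)) ℤ) :
      Matrix (Fin (g-1) ⊕ Fin (g-1)) (Fin (g-1) ⊕ Fin (g-1)) ℤ) = 1 from rfl, Emat_one,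
      Matrix.mul_one, hUW]

lemma mem_stab_iff {m : ℕ} {J : Matrix (Fin m) (Fin m) ℤ} {v : Fin m → ℤ}
    {B : GL (Fin m) ℤ} : B ∈ glFormStab m J v ↔
      ((B : Matrix (Fin m) (Fin m) ℤ)ᵀ * J * (B : Matrix (Fin m) (Fin m) ℤ) = J ∧
        (B : Matrix (Fin m) (Fin m) ℤ).mulVec v = v) := Iff.rfl

/-- The symplectic part of an element of the stabilizer. -/
def Aof (g : ℕ) (hg : 1 ≤ g) (B : glFormStab (2*g-1) (primeJ g) (vPrime g)) :
    Matrix.symplecticGroup (Fin (g-1)) ℤ :=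
  ⟨Sof g (B : GL (Fin (2*g-1)) ℤ),
    Sof_mem g hg _ (mem_stab_iff.mp B.2).1 (mem_stab_iff.mp B.2).2⟩

/-- The forward map. -/
def toSemi (g : ℕ) (hg : 1 ≤ g) (B : glFormStab (2*g-1) (primeJ g) (vPrime g)) :
    SemidirectProduct (Multiplicative ((Fin (g-1) ⊕ Fin (g-1)) → ℤ))
      (Matrix.symplecticGroup (Fin (g-1)) ℤ) (spMulAutHom (g-1)) :=
  ⟨Multiplicative.ofAdd (Matrix.J (Fin (g-1)) ℤ *ᵥ
      (cof g (B : GL (Fin (2*g-1)) ℤ) ᵥ*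
        (((Aof g hg B)⁻¹ : Matrix.symplecticGroup (Fin (g-1)) ℤ) :
          Matrix (Fin (g-1) ⊕ Fin (g-1)) (Fin (g-1) ⊕ Fin (g-1)) ℤ))),
    Aof g hg B⟩

/-- The backward map. -/
def fromSemi (g : ℕ) (hg : 1 ≤ g)
    (x : SemidirectProduct (Multiplicative ((Fin (g-1) ⊕ Fin (g-1)) → ℤ))
      (Matrix.symplecticGroup (Fin (g-1)) ℤ) (spMulAutHom (g-1))) :
    glFormStab (2*g-1) (primeJ g) (vPrime g) :=
  ⟨glOf g hg x.right
      (((-(Matrix.J (Fin (g-1)) ℤ)) *ᵥ (Multiplicative.toAdd x.left)) ᵥ*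
        (x.right : Matrix (Fin (g-1) ⊕ Fin (g-1)) (Fin (g-1) ⊕ Fin (g-1)) ℤ)),
    mem_stab_iff.mpr ⟨BmatOf_form g hg _ _, BmatOf_vec g hg _ _⟩⟩


lemma nof_mul {k : ℕ} (A A' : Matrix.symplecticGroup (Fin k) ℤ) (c c' : Fin k ⊕ Fin k → ℤ) :
    Matrix.J (Fin k) ℤ *ᵥ ((c ᵥ* (A' : Matrix (Fin k ⊕ Fin k) (Fin k ⊕ Fin k) ℤ) + c') ᵥ*
      (((A * A')⁻¹ : Matrix.symplecticGroup (Fin k) ℤ) :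
        Matrix (Fin k ⊕ Fin k) (Fin k ⊕ Fin k) ℤ)) =
    Matrix.J (Fin k) ℤ *ᵥ (c ᵥ* ((A⁻¹ : Matrix.symplecticGroup (Fin k) ℤ) :
      Matrix (Fin k ⊕ Fin k) (Fin k ⊕ Fin k) ℤ)) +
    (A : Matrix (Fin k ⊕ Fin k) (Fin k ⊕ Fin k) ℤ) *ᵥ (Matrix.J (Fin k) ℤ *ᵥ
      (c' ᵥ* ((A'⁻¹ : Matrix.symplecticGroup (Fin k) ℤ) :
        Matrix (Fin k ⊕ Fin k) (Fin k ⊕ Fin k) ℤ))) := by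
  have h1 : (((A * A')⁻¹ : Matrix.symplecticGroup (Fin k) ℤ) :
      Matrix (Fin k ⊕ Fin k) (Fin k ⊕ Fin k) ℤ) =
      ((A'⁻¹ : Matrix.symplecticGroup (Fin k) ℤ) :
        Matrix (Fin k ⊕ Fin k) (Fin k ⊕ Fin k) ℤ) *
      ((A⁻¹ : Matrix.symplecticGroup (Fin k) ℤ) :
        Matrix (Fin k ⊕ Fin k) (Fin k ⊕ Fin k) ℤ) := by
    rw [_root_.mul_inv_rev, Submonoid.coe_mul]
  rw [h1, Matrix.add_vecMul, Matrix.mulVec_add]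
  congr 1
  · rw [← Matrix.vecMul_vecMul, Matrix.vecMul_vecMul c, val_mul_inv, Matrix.vecMul_one]
  · rw [← Matrix.vecMul_vecMul]
    exact Jcomm A _

lemma fromSemi_toSemi (g : ℕ) (hg : 1 ≤ g) (B : glFormStab (2*g-1) (primeJ g) (vPrime g)) :
    fromSemi g hg (toSemi g hg B) = B := by
  apply Subtype.ext
  apply Units.ext
  show BmatOf g (toSemi g hg B).right _ = ((B : GL (Fin (2*g-1)) ℤ) :
    Matrix (Fin (2*g-1)) (Fin (2*g-1)) ℤ)
  rw [show (((-(Matrix.J (Fin (g-1)) ℤ)) *ᵥ Multiplicative.toAdd (toSemi g hg B).left) ᵥ*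
      (((toSemi g hg B).right) : Matrix (Fin (g-1) ⊕ Fin (g-1)) (Fin (g-1) ⊕ Fin (g-1)) ℤ)) =
      cof g (B : GL (Fin (2*g-1)) ℤ) from
    roundtrip_c (Aof g hg B) (cof g (B : GL (Fin (2*g-1)) ℤ))]
  rw [BmatOf, show Emat g (((toSemi g hg B).right) : Matrix (Fin (g-1) ⊕ Fin (g-1))
      (Fin (g-1) ⊕ Fin (g-1)) ℤ) (cof g (B : GL (Fin (2*g-1)) ℤ)) =
      Xof g (B : GL (Fin (2*g-1)) ℤ) from
    (shape g hg _ (mem_stab_iff.mp B.2).2).symm, Xof]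
  simp only [Matrix.mul_assoc]
  rw [hUW g, Matrix.mul_one, ← Matrix.mul_assoc, hUW g, Matrix.one_mul]

lemma toSemi_fromSemi (g : ℕ) (hg : 1 ≤ g)
    (x : SemidirectProduct (Multiplicative ((Fin (g-1) ⊕ Fin (g-1)) → ℤ))
      (Matrix.symplecticGroup (Fin (g-1)) ℤ) (spMulAutHom (g-1))) :
    toSemi g hg (fromSemi g hg x) = x := by
  have hXE : Xof g (fromSemi g hg x : GL (Fin (2*g-1)) ℤ) =
      Emat g ((x.right : Matrix (Fin (g-1) ⊕ Fin (g-1)) (Fin (g-1) ⊕ Fin (g-1)) ℤ))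
        (((-(Matrix.J (Fin (g-1)) ℤ)) *ᵥ (Multiplicative.toAdd x.left)) ᵥ*
          (x.right : Matrix (Fin (g-1) ⊕ Fin (g-1)) (Fin (g-1) ⊕ Fin (g-1)) ℤ)) := by
    show Wmat g * BmatOf g x.right _ * Umat g = _
    rw [BmatOf]
    simp only [Matrix.mul_assoc]
    rw [hWU g hg, Matrix.mul_one, ← Matrix.mul_assoc, hWU g hg, Matrix.one_mul]
  have hS : Sof g (fromSemi g hg x : GL (Fin (2*g-1)) ℤ) =
      (x.right : Matrix (Fin (g-1) ⊕ Fin (g-1)) (Fin (g-1) ⊕ Fin (g-1)) ℤ) := by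
    ext i j
    exact congrFun (congrFun hXE (Sum.inl i)) (Sum.inl j)
  have hA : Aof g hg (fromSemi g hg x) = x.right := Subtype.ext hS
  have hcof : cof g (fromSemi g hg x : GL (Fin (2*g-1)) ℤ) =
      (((-(Matrix.J (Fin (g-1)) ℤ)) *ᵥ (Multiplicative.toAdd x.left)) ᵥ*
        (x.right : Matrix (Fin (g-1) ⊕ Fin (g-1)) (Fin (g-1) ⊕ Fin (g-1)) ℤ)) := by
    funext j
    exact congrFun (congrFun hXE (Sum.inr ())) (Sum.inl j)
  refine SemidirectProduct.ext ?_ ?_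
  · show Multiplicative.ofAdd (Matrix.J (Fin (g-1)) ℤ *ᵥ
      (cof g (fromSemi g hg x : GL (Fin (2*g-1)) ℤ) ᵥ*
        (((Aof g hg (fromSemi g hg x))⁻¹ : Matrix.symplecticGroup (Fin (g-1)) ℤ) :
          Matrix (Fin (g-1) ⊕ Fin (g-1)) (Fin (g-1) ⊕ Fin (g-1)) ℤ))) = x.left
    rw [hcof, hA, roundtrip_n, ofAdd_toAdd]
  · exact hA

lemma toSemi_mul (g : ℕ) (hg : 1 ≤ g) (B B' : glFormStab (2*g-1) (primeJ g) (vPrime g)) :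
    toSemi g hg (B * B') = toSemi g hg B * toSemi g hg B' := by
  have hX : Xof g ((B * B' : glFormStab (2*g-1) (primeJ g) (vPrime g)) :
      GL (Fin (2*g-1)) ℤ) = Xof g (B : GL (Fin (2*g-1)) ℤ) * Xof g (B' : GL (Fin (2*g-1)) ℤ) := by
    show Wmat g * (((B : GL (Fin (2*g-1)) ℤ) * (B' : GL (Fin (2*g-1)) ℤ) : GL (Fin (2*g-1)) ℤ) :
      Matrix (Fin (2*g-1)) (Fin (2*g-1)) ℤ) * Umat g = _
    rw [Units.val_mul]
    simp only [Xof, Matrix.mul_assoc]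
    rw [show Umat g * (Wmat g * (((B' : GL (Fin (2*g-1)) ℤ) :
        Matrix (Fin (2*g-1)) (Fin (2*g-1)) ℤ) * Umat g)) =
        ((B' : GL (Fin (2*g-1)) ℤ) : Matrix (Fin (2*g-1)) (Fin (2*g-1)) ℤ) * Umat g from by
      rw [← Matrix.mul_assoc, hUW g, Matrix.one_mul]]
  have hE : Emat g (Sof g ((B * B' : glFormStab (2*g-1) (primeJ g) (vPrime g)) :
        GL (Fin (2*g-1)) ℤ))
      (cof g ((B * B' : glFormStab (2*g-1) (primeJ g) (vPrime g)) : GL (Fin (2*g-1)) ℤ)) =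
      Emat g (Sof g (B : GL (Fin (2*g-1)) ℤ) * Sof g (B' : GL (Fin (2*g-1)) ℤ))
        (cof g (B : GL (Fin (2*g-1)) ℤ) ᵥ* Sof g (B' : GL (Fin (2*g-1)) ℤ) +
          cof g (B' : GL (Fin (2*g-1)) ℤ)) := by
    rw [← Emat_mul, ← shape g hg _ (mem_stab_iff.mp B.2).2,
      ← shape g hg _ (mem_stab_iff.mp B'.2).2, ← hX,
      shape g hg _ (mem_stab_iff.mp (B * B').2).2]
  obtain ⟨hS, hc⟩ := Emat_inj g hE
  have hAmul : Aof g hg (B * B') = Aof g hg B * Aof g hg B' := Subtype.ext hS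
  refine SemidirectProduct.ext ?_ ?_
  · show Multiplicative.ofAdd (Matrix.J (Fin (g-1)) ℤ *ᵥ
      (cof g ((B * B' : glFormStab (2*g-1) (primeJ g) (vPrime g)) : GL (Fin (2*g-1)) ℤ) ᵥ*
        (((Aof g hg (B * B'))⁻¹ : Matrix.symplecticGroup (Fin (g-1)) ℤ) :
          Matrix (Fin (g-1) ⊕ Fin (g-1)) (Fin (g-1) ⊕ Fin (g-1)) ℤ))) =
      (toSemi g hg B * toSemi g hg B').left
    rw [SemidirectProduct.mul_left]
    have hR : (toSemi g hg B).left * (spMulAutHom (g-1) (toSemi g hg B).right)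
        (toSemi g hg B').left =
        Multiplicative.ofAdd ((Matrix.J (Fin (g-1)) ℤ *ᵥ
          (cof g (B : GL (Fin (2*g-1)) ℤ) ᵥ*
            (((Aof g hg B)⁻¹ : Matrix.symplecticGroup (Fin (g-1)) ℤ) :
              Matrix (Fin (g-1) ⊕ Fin (g-1)) (Fin (g-1) ⊕ Fin (g-1)) ℤ))) +
          ((Aof g hg B : Matrix (Fin (g-1) ⊕ Fin (g-1)) (Fin (g-1) ⊕ Fin (g-1)) ℤ) *ᵥ
            (Matrix.J (Fin (g-1)) ℤ *ᵥ (cof g (B' : GL (Fin (2*g-1)) ℤ) ᵥ*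
              (((Aof g hg B')⁻¹ : Matrix.symplecticGroup (Fin (g-1)) ℤ) :
                Matrix (Fin (g-1) ⊕ Fin (g-1)) (Fin (g-1) ⊕ Fin (g-1)) ℤ))))) := rfl
    rw [hR, hc, hAmul]
    exact congrArg Multiplicative.ofAdd
      (nof_mul (Aof g hg B) (Aof g hg B') (cof g (B : GL (Fin (2*g-1)) ℤ))
        (cof g (B' : GL (Fin (2*g-1)) ℤ)))
  · show Aof g hg (B * B') = (toSemi g hg B * toSemi g hg B').right
    rw [SemidirectProduct.mul_right]
    exact hAmul

end GammaAux

/-- `Γ'_{2g−1} ≅ Sp(2g−2, ℤ) ⋉ ℤ^{2g−2}`. -/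
theorem gammaPrime_iso_semidirect (g : ℕ) (hg : 1 ≤ g) :
    Nonempty
      ((glFormStab (2 * g - 1) (primeJ g) (vPrime g)) ≃*
        SemidirectProduct (Multiplicative ((Fin (g - 1) ⊕ Fin (g - 1)) → ℤ))
          (Matrix.symplecticGroup (Fin (g - 1)) ℤ) (spMulAutHom (g - 1))) :=
  ⟨{ toFun := GammaAux.toSemi g hg
     invFun := GammaAux.fromSemi g hg
     left_inv := GammaAux.fromSemi_toSemi g hg
     right_inv := GammaAux.toSemi_fromSemi g hg
     map_mul' := GammaAux.toSemi_mul g hg }⟩
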